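/- Let m ≥ 1 and let X_A ∈ ℝ^{n×m} have columns x₁, …, x_m and invertible Gram matrix G = X_Aᵀ X_A. Let 1 ∈ ℝ^m denote the all-ones vector. Then 1ᵀ G⁻¹ 1 > 0, and setting A_A = (1ᵀ G⁻¹ 1)^{-1/2}, ω_A = A_A · G⁻¹ 1 and u_A = X_A ω_A, the equiangular vector u_A satisfies ‖u_A‖₂ = 1 and xⱼᵀ u_A = A_A for every j = 1, …, m; i.e., u_A is a unit vector making equal inner products with all active variables. -/

import Mathlib

open Matrix BigOperators

/-- Properties of the LARS equiangular vector: if the Gram matrix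
`G = X_Aᵀ X_A` of the active variables is invertible, then `1ᵀG⁻¹1 > 0`, and
with `A_A = (1ᵀG⁻¹1)^{-1/2}`, `ω_A = A_A G⁻¹1`, `u_A = X_A ω_A`, the vector
`u_A` is a unit vector (`‖u_A‖₂ = 1`) making equal inner products `A_A` with
all active variables (columns of `X_A`). -/
theorem lars_equiangular_vector {n m : ℕ} (hm : 1 ≤ m)
    (XA : Matrix (Fin n) (Fin m) ℝ)
    (G : Matrix (Fin m) (Fin m) ℝ) (hG : G = XAᵀ * XA)
    (hGinv : IsUnit G.det) :
    0 < (fun _ => (1 : ℝ)) ⬝ᵥ (G⁻¹ *ᵥ fun _ => (1 : ℝ)) ∧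
    (Real.sqrt (∑ i, ((XA *ᵥ
        ((Real.sqrt ((fun _ => (1 : ℝ)) ⬝ᵥ (G⁻¹ *ᵥ fun _ => (1 : ℝ))))⁻¹ •
          (G⁻¹ *ᵥ fun _ => (1 : ℝ)))) i) ^ 2) = 1) ∧
    (∀ j : Fin m,
      (∑ i, XA i j * (XA *ᵥ
          ((Real.sqrt ((fun _ => (1 : ℝ)) ⬝ᵥ (G⁻¹ *ᵥ fun _ => (1 : ℝ))))⁻¹ •
            (G⁻¹ *ᵥ fun _ => (1 : ℝ)))) i) =
        (Real.sqrt ((fun _ => (1 : ℝ)) ⬝ᵥ (G⁻¹ *ᵥ fun _ => (1 : ℝ))))⁻¹) := by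
  have hconj : XAᴴ = XAᵀ := rfl
  have hpsd : G.PosSemidef := by
    rw [hG, ← hconj]; exact posSemidef_conjTranspose_mul_self XA
  have hpd : G.PosDef := by
    refine PosDef.of_dotProduct_mulVec_pos hpsd.1 (fun x hx => ?_)
    rcases (hpsd.dotProduct_mulVec_nonneg x).lt_or_eq with h | h
    · exact h
    · exfalso
      have h0 : G *ᵥ x = 0 := (hpsd.dotProduct_mulVec_zero_iff x).mp h.symm
      have hx0 : x = 0 := by
        have := congrArg (fun y => G⁻¹ *ᵥ y) h0
        simpa [mulVec_mulVec, Matrix.nonsing_inv_mul G hGinv] using this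
      exact hx hx0
  have hinv : (G⁻¹).PosDef := hpd.inv
  set one : Fin m → ℝ := fun _ => (1 : ℝ) with hone
  set v : Fin m → ℝ := G⁻¹ *ᵥ one with hv
  have hone0 : one ≠ 0 := by
    intro h
    have := congrFun h ⟨0, hm⟩
    simp [hone] at this
  have hs : 0 < one ⬝ᵥ v := by simpa using hinv.dotProduct_mulVec_pos hone0
  set s : ℝ := one ⬝ᵥ v with hsdef
  set c : ℝ := Real.sqrt s with hc
  have hcpos : 0 < c := Real.sqrt_pos.mpr hs
  have hc2 : c * c = s := Real.mul_self_sqrt hs.le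
  have hGv : G *ᵥ v = one := by
    rw [hv, mulVec_mulVec, Matrix.mul_nonsing_inv G hGinv, one_mulVec]
  set w : Fin m → ℝ := c⁻¹ • v with hw
  -- key fact: XAᵀ *ᵥ (XA *ᵥ w) = c⁻¹ • one
  have hkey : XAᵀ *ᵥ (XA *ᵥ w) = c⁻¹ • one := by
    rw [mulVec_mulVec, ← hG, hw, mulVec_smul, hGv]
  refine ⟨hs, ?_, ?_⟩
  · have hdot : ∑ i, ((XA *ᵥ w) i) ^ 2 = (XA *ᵥ w) ⬝ᵥ (XA *ᵥ w) := by
      simp [dotProduct, sq]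
    have : (XA *ᵥ w) ⬝ᵥ (XA *ᵥ w) = 1 := by
      have h1 : (XA *ᵥ w) ⬝ᵥ (XA *ᵥ w) = (XAᵀ *ᵥ (XA *ᵥ w)) ⬝ᵥ w := by
        rw [dotProduct_mulVec]
        congr 1
        rw [← transpose_transpose XA, vecMul_transpose, transpose_transpose]
      rw [h1, hkey]
      have h2 : one ⬝ᵥ w = c⁻¹ * s := by
        simp [hw, dotProduct_smul, smul_eq_mul, hsdef]
      rw [smul_dotProduct, smul_eq_mul, h2]
      field_simp
      nlinarith [hc2]
    rw [hdot, this, Real.sqrt_one]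
  · intro j
    have h3 : ∑ i, XA i j * (XA *ᵥ w) i = (XAᵀ *ᵥ (XA *ᵥ w)) j := by
      simp [mulVec, dotProduct, transpose_apply]
    rw [h3, hkey]
    simp [hone]
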